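/- Let 0 < d < 1/2, ω = √(1 − d²), v₀ < 0, y(τ) = (v₀/ω)·e^{−dτ}·sin(ωτ), and τ_F = (π − arctan(2dω/(1 − 2d²)))/ω the lift-off time (the smallest positive zero of Λ(τ) = −2d·y'(τ) − y(τ)). Then the lift-off normal velocity is exactly y'(τ_F) = −v₀·e^{−dτ_F} > 0; equivalently, the kinematic coefficient of restitution r = y'(τ_F)/(−v₀) equals e^{−dτ_F}. -/

import Mathlib

/-- Kelvin–Voigt bounce (zero-gravity limit), `0 < d < 1/2`, `ω = √(1 − d²)`,
`v₀ < 0`, `y(τ) = (v₀/ω)·e^{−dτ}·sin(ωτ)`, lift-off time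
`τ_F = (π − arctan(2dω/(1 − 2d²)))/ω` (smallest positive zero of
`Λ = −2d·y' − y`). The lift-off normal velocity is `y'(τ_F) = −v₀·e^{−dτ_F} > 0`;
equivalently, the kinematic coefficient of restitution `r = y'(τ_F)/(−v₀)`
equals `e^{−dτ_F}`. -/
theorem kelvin_voigt_liftoff_velocity
    (d ω v₀ : ℝ) (hd0 : 0 < d) (hd1 : d < 1 / 2) (hω : ω = Real.sqrt (1 - d ^ 2))
    (hv₀ : v₀ < 0)
    (y : ℝ → ℝ)
    (hy : y = fun τ => (v₀ / ω) * Real.exp (-(d * τ)) * Real.sin (ω * τ))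
    (τF : ℝ)
    (hτF : τF = (Real.pi - Real.arctan (2 * d * ω / (1 - 2 * d ^ 2))) / ω) :
    deriv y τF = -v₀ * Real.exp (-(d * τF)) ∧
      0 < deriv y τF ∧
      deriv y τF / (-v₀) = Real.exp (-(d * τF)) := by
  have h1d : (0:ℝ) < 1 - d ^ 2 := by nlinarith
  have hω0 : 0 < ω := by rw [hω]; exact Real.sqrt_pos.mpr h1d
  have hω2 : ω ^ 2 = 1 - d ^ 2 := by rw [hω]; exact Real.sq_sqrt h1d.le
  have hc : (0:ℝ) < 1 - 2 * d ^ 2 := by nlinarith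
  set a := Real.arctan (2 * d * ω / (1 - 2 * d ^ 2)) with ha
  have hsqrt : Real.sqrt (1 + (2 * d * ω / (1 - 2 * d ^ 2)) ^ 2) = 1 / (1 - 2 * d ^ 2) := by
    have h : 1 + (2 * d * ω / (1 - 2 * d ^ 2)) ^ 2 = (1 / (1 - 2 * d ^ 2)) ^ 2 := by
      field_simp
      nlinarith [hω2]
    rw [h, Real.sqrt_sq (by positivity)]
  have hcos : Real.cos a = 1 - 2 * d ^ 2 := by
    rw [ha, Real.cos_arctan, hsqrt]
    field_simp
  have hsin : Real.sin a = 2 * d * ω := by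
    rw [ha, Real.sin_arctan, hsqrt]
    field_simp
  have hωτ : ω * τF = Real.pi - a := by
    rw [hτF]
    field_simp
  have hde : HasDerivAt (fun τ : ℝ => Real.exp (-(d * τ))) (Real.exp (-(d * τF)) * (-d)) τF := by
    have : HasDerivAt (fun τ : ℝ => -(d * τ)) (-d) τF := by
      exact ((hasDerivAt_id τF).const_mul d).neg.congr_deriv (by simp)
    exact this.exp
  have hds : HasDerivAt (fun τ : ℝ => Real.sin (ω * τ)) (Real.cos (ω * τF) * ω) τF := by
    have : HasDerivAt (fun τ : ℝ => ω * τ) ω τF := by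
      simpa using (hasDerivAt_id τF).const_mul ω
    exact this.sin
  have hD : HasDerivAt y ((v₀ / ω) * (Real.exp (-(d * τF)) * (-d) * Real.sin (ω * τF)
      + Real.exp (-(d * τF)) * (Real.cos (ω * τF) * ω))) τF := by
    rw [hy]
    simpa [mul_assoc] using (hde.mul hds).const_mul (v₀ / ω)
  have hval : deriv y τF = -v₀ * Real.exp (-(d * τF)) := by
    rw [hD.deriv, hωτ, Real.sin_pi_sub, Real.cos_pi_sub, hsin, hcos]
    field_simp
    ring
  refine ⟨hval, ?_, ?_⟩
  · rw [hval]
    have := Real.exp_pos (-(d * τF))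
    nlinarith
  · rw [hval]
    field_simp
    exact div_self hv₀.ne
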